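/- Suppose for each arm a ∈ [n] and each state ψ in the (finite) support of a prior μ, a policy π satisfies π_a(ψ) ≥ ε/n for some ε ∈ [0,1], and π is BIR (its Bayesian-expected utility is at least the outside option V_out). Then the ε-greedy policy, which plays the best arm for ψ with probability 1−ε and uniformly at random with probability ε, is also BIR. Consequently the infimum over BIR state-aware policies of max over states and arms of 1/π_a(ψ) equals the infimum of n/ε over ε ≥ 0 for which ε-greedy is BIR. -/

import Mathlib

theorem stmt3 {Ψ : Type*} [Fintype Ψ] (n : ℕ) (hn : 0 < n)
    (μ : Ψ → ℝ) (hμ0 : ∀ ψ, 0 ≤ μ ψ) (hμ1 : ∑ ψ, μ ψ = 1)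
    (V : Ψ → Fin n → ℝ) (hV : ∀ ψ a, V ψ a ∈ Set.Icc (0 : ℝ) 1)
    (astar : Ψ → Fin n) (hastar : ∀ ψ a, V ψ a ≤ V ψ (astar ψ))
    (Vout : ℝ)
    (supp : Finset Ψ) (hsupp : supp = Finset.univ.filter (fun ψ => μ ψ ≠ 0))
    (hne : supp.Nonempty)
    (BIR : (Ψ → Fin n → ℝ) → Prop)
    (hBIRdef : ∀ π, BIR π ↔ Vout ≤ ∑ ψ, μ ψ * ∑ a, π ψ a * V ψ a)
    (greedy : ℝ → Ψ → Fin n → ℝ)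
    (hgreedy : ∀ ε ψ a,
      greedy ε ψ a = (1 - ε) * (if a = astar ψ then 1 else 0) + ε / n)
    (ε : ℝ) (hε0 : 0 ≤ ε) (hε1 : ε ≤ 1)
    (π : Ψ → Fin n → ℝ)
    (hπdist : ∀ ψ, (∀ a, 0 ≤ π ψ a) ∧ ∑ a, π ψ a = 1)
    (hπlb : ∀ ψ ∈ supp, ∀ a, ε / n ≤ π ψ a)
    (hπBIR : BIR π) :
    BIR (greedy ε) ∧
    sInf {x : ℝ | ∃ π' : Ψ → Fin n → ℝ,
          (∀ ψ a, 0 < π' ψ a) ∧ (∀ ψ, ∑ a, π' ψ a = 1) ∧ BIR π' ∧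
          x = supp.sup' hne (fun ψ =>
                Finset.univ.sup' ⟨⟨0, hn⟩, Finset.mem_univ _⟩
                  (fun a => 1 / π' ψ a))}
      = sInf {x : ℝ | ∃ ε' : ℝ, 0 < ε' ∧ ε' ≤ 1 ∧ BIR (greedy ε') ∧
          x = n / ε'} := by
  have hnpos : (0:ℝ) < n := by exact_mod_cast hn
  have hn0 : (n:ℝ) ≠ 0 := ne_of_gt hnpos
  -- key lemma
  have key : ∀ (ε' : ℝ), 0 ≤ ε' → ε' ≤ 1 → ∀ (p : Ψ → Fin n → ℝ),
      (∀ ψ, ∑ a, p ψ a = 1) →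
      (∀ ψ ∈ supp, ∀ a, ε' / n ≤ p ψ a) → BIR p → BIR (greedy ε') := by
    intro ε' h0 h1 p hsum hlb hbir
    rw [hBIRdef] at hbir ⊢
    refine le_trans hbir (Finset.sum_le_sum ?_)
    intro ψ _
    rcases eq_or_ne (μ ψ) 0 with hμ | hμ
    · simp [hμ]
    have hψ : ψ ∈ supp := by rw [hsupp]; simp [hμ]
    refine mul_le_mul_of_nonneg_left ?_ (hμ0 ψ)
    have gsum : ∑ a, greedy ε' ψ a * V ψ a
        = (1 - ε') * V ψ (astar ψ) + ∑ a : Fin n, (ε'/n) * V ψ a := by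
      have e : ∀ a : Fin n, greedy ε' ψ a * V ψ a
          = (if a = astar ψ then (1-ε') * V ψ a else 0) + (ε'/n) * V ψ a := by
        intro a
        rw [hgreedy]
        split <;> ring
      rw [Finset.sum_congr rfl (fun a _ => e a), Finset.sum_add_distrib,
        Finset.sum_ite_eq' Finset.univ (astar ψ)]
      simp
    rw [gsum]
    have psum : ∑ a, p ψ a * V ψ a
        = (∑ a : Fin n, (p ψ a - ε'/n) * V ψ a) + ∑ a : Fin n, (ε'/n) * V ψ a := by
      rw [← Finset.sum_add_distrib]
      exact Finset.sum_congr rfl (fun a _ => by ring)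
    rw [psum]
    have h2 : (∑ a : Fin n, (p ψ a - ε'/n) * V ψ a) ≤ (1 - ε') * V ψ (astar ψ) := by
      have h3 : (∑ a : Fin n, (p ψ a - ε'/n) * V ψ a)
          ≤ ∑ a : Fin n, (p ψ a - ε'/n) * V ψ (astar ψ) := by
        refine Finset.sum_le_sum (fun a _ => ?_)
        exact mul_le_mul_of_nonneg_left (hastar ψ a) (by linarith [hlb ψ hψ a])
      have h4 : ∑ a : Fin n, (p ψ a - ε'/n) * V ψ (astar ψ)
          = (1 - ε') * V ψ (astar ψ) := by
        rw [← Finset.sum_mul, Finset.sum_sub_distrib, hsum ψ, Finset.sum_const,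
          Finset.card_univ, Fintype.card_fin]
        have : (n : ℝ) * (ε' / n) = ε' := by field_simp
        rw [nsmul_eq_mul, this]
      linarith
    linarith
  constructor
  · exact key ε hε0 hε1 π (fun ψ => (hπdist ψ).2) hπlb hπBIR
  -- the sets
  set S : Set ℝ := {x : ℝ | ∃ π' : Ψ → Fin n → ℝ,
          (∀ ψ a, 0 < π' ψ a) ∧ (∀ ψ, ∑ a, π' ψ a = 1) ∧ BIR π' ∧
          x = supp.sup' hne (fun ψ =>
                Finset.univ.sup' ⟨⟨0, hn⟩, Finset.mem_univ _⟩
                  (fun a => 1 / π' ψ a))} with hSdef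
  set T : Set ℝ := {x : ℝ | ∃ ε' : ℝ, 0 < ε' ∧ ε' ≤ 1 ∧ BIR (greedy ε') ∧
          x = n / ε'} with hTdef
  have hST : S ⊆ T := by
    rintro x ⟨p, hpos, hsum, hbir, hx⟩
    have hxge : ∀ ψ ∈ supp, ∀ a : Fin n, 1 / p ψ a ≤ x := by
      intro ψ hψ a
      rw [hx]
      exact le_trans (Finset.le_sup' (fun a => 1 / p ψ a) (Finset.mem_univ a))
        (Finset.le_sup' (fun ψ => Finset.univ.sup' ⟨⟨0, hn⟩, Finset.mem_univ _⟩
          (fun a => 1 / p ψ a)) hψ)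
    obtain ⟨ψ0, hψ0⟩ := hne
    have hxn : (n : ℝ) ≤ x := by
      have hex : ∃ a : Fin n, p ψ0 a ≤ 1 / n := by
        by_contra h
        push_neg at h
        have h1 : (1:ℝ) < ∑ a, p ψ0 a := by
          calc (1:ℝ) = ∑ _a : Fin n, (1/n : ℝ) := by
                rw [Finset.sum_const, Finset.card_univ, Fintype.card_fin,
                  nsmul_eq_mul]; field_simp
            _ < ∑ a, p ψ0 a := Finset.sum_lt_sum_of_nonempty
                ⟨⟨0, hn⟩, Finset.mem_univ _⟩ (fun a _ => h a)
        rw [hsum ψ0] at h1; linarith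
      obtain ⟨a, ha⟩ := hex
      have := one_div_le_one_div_of_le (hpos ψ0 a) ha
      rw [one_div_one_div] at this
      exact this.trans (hxge ψ0 hψ0 a)
    have hx0 : 0 < x := lt_of_lt_of_le hnpos hxn
    refine ⟨n / x, div_pos hnpos hx0, (div_le_one hx0).mpr hxn, ?_, ?_⟩
    · refine key (n / x) (le_of_lt (div_pos hnpos hx0))
        ((div_le_one hx0).mpr hxn) p hsum ?_ hbir
      intro ψ hψ a
      have heq : (n : ℝ) / x / n = 1 / x := by field_simp
      rw [heq]
      have h := hxge ψ hψ a
      rw [div_le_iff₀ (hpos ψ a)] at h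
      exact (div_le_iff₀ hx0).mpr (by linarith [mul_comm x (p ψ a)])
    · field_simp
  have hTS : ∀ t ∈ T, ∃ s ∈ S, s ≤ t := by
    rintro t ⟨ε', h0, h1, hbir, ht⟩
    have hεn : 0 < ε' / n := div_pos h0 hnpos
    have hgpos : ∀ ψ a, ε' / n ≤ greedy ε' ψ a := by
      intro ψ a
      rw [hgreedy]
      have : (0:ℝ) ≤ (1 - ε') * (if a = astar ψ then 1 else 0) :=
        mul_nonneg (by linarith) (by split <;> norm_num)
      linarith
    have hgsum : ∀ ψ, ∑ a, greedy ε' ψ a = 1 := by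
      intro ψ
      have e : ∀ a : Fin n, greedy ε' ψ a
          = (if a = astar ψ then (1-ε') else 0) + ε'/n := by
        intro a; rw [hgreedy]; split <;> ring
      rw [Finset.sum_congr rfl (fun a _ => e a), Finset.sum_add_distrib,
        Finset.sum_ite_eq' Finset.univ (astar ψ), Finset.sum_const,
        Finset.card_univ, Fintype.card_fin, nsmul_eq_mul]
      simp
      field_simp
      ring
    refine ⟨supp.sup' hne (fun ψ =>
        Finset.univ.sup' ⟨⟨0, hn⟩, Finset.mem_univ _⟩
          (fun a => 1 / greedy ε' ψ a)),
      ⟨greedy ε', fun ψ a => lt_of_lt_of_le hεn (hgpos ψ a), hgsum, hbir, rfl⟩, ?_⟩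
    rw [ht]
    refine Finset.sup'_le _ _ (fun ψ _ => Finset.sup'_le _ _ (fun a _ => ?_))
    have := one_div_le_one_div_of_le hεn (hgpos ψ a)
    rwa [one_div_div] at this
  have bddT : BddBelow T := by
    refine ⟨0, ?_⟩
    rintro t ⟨ε', h0, _, _, ht⟩
    rw [ht]
    exact div_nonneg hnpos.le h0.le
  have bddS : BddBelow S := by
    refine ⟨0, fun s hs => ?_⟩
    obtain ⟨ε', h0, _, _, ht⟩ := hST hs
    rw [ht]
    exact div_nonneg hnpos.le h0.le
  rcases Set.eq_empty_or_nonempty T with hT | hT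
  · have hS : S = ∅ := Set.eq_empty_of_subset_empty (hT ▸ hST)
    rw [hS, hT]
  · obtain ⟨t0, ht0⟩ := hT
    obtain ⟨s0, hs0, _⟩ := hTS t0 ht0
    refine le_antisymm ?_ (csInf_le_csInf bddT ⟨s0, hs0⟩ hST)
    refine le_csInf ⟨t0, ht0⟩ (fun t ht => ?_)
    obtain ⟨s, hs, hle⟩ := hTS t ht
    exact (csInf_le bddS hs).trans hle
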